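/- arXiv:1501.01999 — 2 statements merged into one kernel-verified Lean document; each statement's English description precedes it below -/
import Mathlib

section
/- Let F : S ⇄ T : G be adjoint exact (triangulated) functors between triangulated categories. Then the following are equivalent: (i) G is faithful; (ii) F is surjective up to direct summands, i.e. every object x ∈ T is a retract of F(y) for some y ∈ S; (iii) the counit of adjunction ε_x : F G(x) → x admits a (possibly unnatural) section for every object x ∈ T. -/
/-!
Formalization of statements from "Grothendieck-Neeman duality and the
Wirthmüller isomorphism" by Balmer, Dell'Ambrogio and Sanders.
-/

noncomputable section

open CategoryTheory CategoryTheory.Limits CategoryTheory.Pretriangulated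
  CategoryTheory.MonoidalCategory CategoryTheory.MonoidalClosed Opposite

universe v u u₁ u₂ u₃

namespace GN

section Compact

variable {C : Type u} [Category.{v} C]

/-- An object `t` is compact if `Hom(t, -)`, viewed as a functor to abelian groups,
preserves small coproducts. -/
def IsCompactObj [Preadditive C] (t : C) : Prop :=
  ∀ J : Type v, Nonempty (PreservesColimitsOfShape (Discrete J)
    (preadditiveCoyoneda.obj (op t)))

/-- A functor preserves arbitrary (small) coproducts. -/
def PreservesCoproducts {D : Type u₂} [Category.{v} D] (F : C ⥤ D) : Prop :=
  ∀ J : Type v, Nonempty (PreservesColimitsOfShape (Discrete J) F)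

/-- A functor preserves arbitrary (small) products. -/
def PreservesProducts {D : Type u₂} [Category.{v} D] (F : C ⥤ D) : Prop :=
  ∀ J : Type v, Nonempty (PreservesLimitsOfShape (Discrete J) F)

/-- A compactly generated category: it admits all small coproducts and
has a set of compact generators. -/
structure CompactlyGenerated (C : Type u) [Category.{v} C] [Preadditive C] : Prop where
  hasCoproducts : HasCoproducts.{v} C
  exists_generators : ∃ (ι : Type v) (G : ι → C), (∀ i, IsCompactObj (G i)) ∧
    ∀ t : C, (∀ (i : ι) (f : G i ⟶ t), f = 0) → IsZero t

end Compact

section Tensor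

variable {C : Type u} [Category.{v} C] [MonoidalCategory C] [MonoidalClosed C]

/-- The canonical map `hom(x,𝟙) ⊗ y ⟶ hom(x,y)`. -/
def rigidComparison (x y : C) : (ihom x).obj (𝟙_ C) ⊗ y ⟶ (ihom x).obj y :=
  MonoidalClosed.curry ((α_ x ((ihom x).obj (𝟙_ C)) y).inv ≫
    (((ihom.ev x).app (𝟙_ C)) ▷ y) ≫ (λ_ y).hom)

/-- An object `x` is rigid if `hom(x,𝟙) ⊗ y ⟶ hom(x,y)` is an isomorphism for all `y`. -/
def IsRigid (x : C) : Prop := ∀ y : C, IsIso (rigidComparison x y)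

/-- An object `u` is `⊗`-invertible if `u ⊗ v ≅ 𝟙` for some `v`. -/
def TensorInvertible (u : C) : Prop := ∃ v : C, Nonempty (u ⊗ v ≅ 𝟙_ C)

/-- The `κ`-twisted duality functor `D_κ = hom(-,κ)`. -/
@[reducible] def Dfun (κ : C) : Cᵒᵖ ⥤ C := MonoidalClosed.internalHom.flip.obj κ

/-- The canonical double-duality map `ϖ : x ⟶ D_κ D_κ (x)`, i.e. the unit/counit of the
self-adjunction of `D_κ = hom(-,κ)`. -/
def varpi [BraidedCategory C] (κ x : C) : x ⟶ (ihom ((ihom x).obj κ)).obj κ :=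
  MonoidalClosed.curry ((β_ ((ihom x).obj κ) x).hom ≫ (ihom.ev x).app κ)

/-- A rigidly-compactly generated tensor-triangulated category: it admits all small
coproducts, its compact objects coincide with its rigid objects, and it has a set of
compact generators. -/
structure RigidlyCompactlyGenerated (C : Type u) [Category.{v} C] [Preadditive C]
    [MonoidalCategory C] [MonoidalClosed C] : Prop where
  hasCoproducts : HasCoproducts.{v} C
  compact_iff_rigid : ∀ x : C, IsCompactObj x ↔ IsRigid x
  exists_generators : ∃ (ι : Type v) (G : ι → C), (∀ i, IsCompactObj (G i)) ∧
    ∀ t : C, (∀ (i : ι) (f : G i ⟶ t), f = 0) → IsZero t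

end Tensor

section Triang

variable {C : Type u} [Category.{v} C] [HasZeroObject C] [Preadditive C] [HasShift C ℤ]
  [∀ n : ℤ, (shiftFunctor C n).Additive] [Pretriangulated C]

/-- A thick triangulated subcategory, given as a predicate on objects:
it contains the zero objects, and is closed under shifts, cones and direct summands
(hence in particular under isomorphisms). -/
structure IsThickSubcategory (S : Set C) : Prop where
  zero : ∀ x : C, IsZero x → x ∈ S
  shift : ∀ x ∈ S, ∀ n : ℤ, x⟦n⟧ ∈ S
  ext₃ : ∀ T : Triangle C, (T ∈ distTriang C) → T.obj₁ ∈ S → T.obj₂ ∈ S → T.obj₃ ∈ S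
  retract : ∀ x y : C, (∃ (s : x ⟶ y) (r : y ⟶ x), s ≫ r = 𝟙 x) → y ∈ S → x ∈ S

/-- The thick subcategory generated by a set of objects. -/
def thickClosure (S : Set C) : Set C :=
  { x | ∀ T : Set C, IsThickSubcategory T → S ⊆ T → x ∈ T }

/-- A `C^c`-submodule of `C`: a thick triangulated subcategory which is closed under
tensoring with compact objects. -/
structure IsSubmodule [MonoidalCategory C] (S : Set C) extends IsThickSubcategory S : Prop where
  smul : ∀ c x : C, IsCompactObj c → x ∈ S → (c ⊗ x) ∈ S

end Triang

section Dual

variable {C : Type u} [Category.{v} C] [MonoidalCategory C] [BraidedCategory C]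
  [MonoidalClosed C]

/-- `κ` is a (possibly external) dualizing object for `S ⊆ C`: the `κ`-twisted
duality `D_κ = hom(-,κ)` preserves `S` and every object of `S` is `κ`-reflexive;
equivalently, `D_κ` restricts to an anti-equivalence `S^op ≃ S`. -/
structure IsExternalDualizing (S : Set C) (κ : C) : Prop where
  stable : ∀ x ∈ S, (ihom x).obj κ ∈ S
  reflexive : ∀ x ∈ S, IsIso (varpi κ x)

/-- `κ ∈ S` is a dualizing object for `S`. -/
structure IsDualizing (S : Set C) (κ : C) extends IsExternalDualizing S κ : Prop where
  mem : κ ∈ S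

end Dual

section Pullback

variable {C : Type u₁} {D : Type u₂} [Category.{v} C] [Category.{v} D]
  [Preadditive C] [MonoidalCategory C]

/-- The compact pull-back `f^#(D₀)` of a subcategory `D₀ ⊆ D` along `f_* : C ⥤ D`. -/
def compactPullback (fpush : C ⥤ D) (D₀ : Set D) : Set C :=
  { x | ∀ c : C, IsCompactObj c → fpush.obj (c ⊗ x) ∈ D₀ }

end Pullback

section Proj

variable {D : Type u₁} {C : Type u₂} [Category.{v} D] [Category.{v} C]
  [MonoidalCategory D] [MonoidalCategory C]

/-- The canonical projection formula map `π : x ⊗ f_*(y) ⟶ f_*(f^*(x) ⊗ y)`,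
obtained by adjunction from `f^*(x ⊗ f_* y) ≅ f^* x ⊗ f^* f_* y → f^* x ⊗ y`. -/
def projFormula (fstar : D ⥤ C) [fstar.Monoidal] (fpush : C ⥤ D) (adj : fstar ⊣ fpush)
    (x : D) (y : C) : x ⊗ fpush.obj y ⟶ fpush.obj (fstar.obj x ⊗ y) :=
  (adj.homEquiv _ _)
    (Functor.OplaxMonoidal.δ fstar x (fpush.obj y) ≫ (fstar.obj x ◁ adj.counit.app y))

/-- The canonical comparison map `f^(1)(x) ⊗ f^*(y) ⟶ f^(1)(x ⊗ y)`, obtained by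
adjunction from the counit `f_* f^(1) → Id` via the projection formula. -/
def gnComparison [BraidedCategory D] [BraidedCategory C] (fstar : D ⥤ C) [fstar.Monoidal]
    (fpush : C ⥤ D) (adj1 : fstar ⊣ fpush) (fone : D ⥤ C) (adj2 : fpush ⊣ fone)
    (hπ : ∀ (x : D) (y : C), IsIso (projFormula fstar fpush adj1 x y)) (x y : D) :
    fone.obj x ⊗ fstar.obj y ⟶ fone.obj (x ⊗ y) :=
  haveI := hπ y (fone.obj x)
  (adj2.homEquiv _ _)
    (fpush.map (β_ (fone.obj x) (fstar.obj y)).hom ≫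
      inv (projFormula fstar fpush adj1 y (fone.obj x)) ≫
      (β_ y (fpush.obj (fone.obj x))).hom ≫ (adj2.counit.app x ▷ y))

end Proj

/-- Lemma 4.2. -/
theorem statement7 {S : Type u₁} {T : Type u₂}
    [Category.{v} S] [Preadditive S] [HasZeroObject S] [HasShift S ℤ]
    [∀ n : ℤ, (shiftFunctor S n).Additive] [Pretriangulated S] [IsTriangulated S]
    [Category.{v} T] [Preadditive T] [HasZeroObject T] [HasShift T ℤ]
    [∀ n : ℤ, (shiftFunctor T n).Additive] [Pretriangulated T] [IsTriangulated T]
    (F : S ⥤ T) [F.CommShift ℤ] [F.IsTriangulated]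
    (G : T ⥤ S) [G.CommShift ℤ] [G.IsTriangulated]
    (adj : F ⊣ G) :
    (G.Faithful ↔ ∀ x : T, ∃ (y : S) (s : x ⟶ F.obj y) (r : F.obj y ⟶ x), s ≫ r = 𝟙 x) ∧
    (G.Faithful ↔ ∀ x : T, ∃ s : x ⟶ F.obj (G.obj x), s ≫ adj.counit.app x = 𝟙 x) := by
  -- (i) → (iii)
  have h13 : G.Faithful → ∀ x : T, ∃ s : x ⟶ F.obj (G.obj x),
      s ≫ adj.counit.app x = 𝟙 x := by
    intro hG x
    obtain ⟨z, g, h, hT⟩ := Pretriangulated.distinguished_cocone_triangle (adj.counit.app x)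
    have hg0 : g = 0 := by
      apply G.map_injective
      rw [G.map_zero]
      have hz : G.map (adj.counit.app x) ≫ G.map g = 0 := by
        rw [← G.map_comp]
        have hc := Pretriangulated.comp_distTriang_mor_zero₁₂ _ hT
        simp only [Pretriangulated.Triangle.mk_mor₁,
          Pretriangulated.Triangle.mk_mor₂] at hc
        exact (congrArg G.map hc).trans (G.map_zero _ _)
      calc G.map g = 𝟙 (G.obj x) ≫ G.map g := (Category.id_comp _).symm
        _ = (adj.unit.app (G.obj x) ≫ G.map (adj.counit.app x)) ≫ G.map g := by
            rw [adj.right_triangle_components]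
        _ = 0 := by rw [Category.assoc, hz, comp_zero]
    obtain ⟨s, hs⟩ := Pretriangulated.Triangle.coyoneda_exact₂ _ hT (𝟙 x)
      (by rw [hg0]; exact comp_zero)
    exact ⟨s, hs.symm⟩
  -- (iii) → (ii)
  have h32 : (∀ x : T, ∃ s : x ⟶ F.obj (G.obj x), s ≫ adj.counit.app x = 𝟙 x) →
      ∀ x : T, ∃ (y : S) (s : x ⟶ F.obj y) (r : F.obj y ⟶ x), s ≫ r = 𝟙 x := by
    intro h x
    obtain ⟨s, hs⟩ := h x
    exact ⟨G.obj x, s, adj.counit.app x, hs⟩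
  -- (ii) → (i)
  have h21 : (∀ x : T, ∃ (y : S) (s : x ⟶ F.obj y) (r : F.obj y ⟶ x), s ≫ r = 𝟙 x) →
      G.Faithful := by
    intro h
    refine ⟨fun {x x'} f f' hff' => ?_⟩
    obtain ⟨y, s, r, hsr⟩ := h x
    have key : ∀ (g g' : F.obj y ⟶ x'), G.map g = G.map g' → g = g' := by
      intro g g' hgg'
      apply (adj.homEquiv y x').injective
      rw [adj.homEquiv_unit, adj.homEquiv_unit, hgg']
    have := key (r ≫ f) (r ≫ f') (by rw [G.map_comp, G.map_comp, hff'])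
    calc f = s ≫ r ≫ f := by rw [← Category.assoc, hsr, Category.id_comp]
      _ = s ≫ r ≫ f' := by rw [this]
      _ = f' := by rw [← Category.assoc, hsr, Category.id_comp]
  exact ⟨⟨fun hG => h32 (h13 hG), h21⟩, ⟨h13, fun h => h21 (h32 h)⟩⟩

end GN
end
end

section
/- Consider two composable coproduct-preserving tensor-exact functors g* : E → D and f* : D → C between rigidly-compactly generated tensor-triangulated categories, with composite (gf)* := f* ∘ g*, and let E₀ be any E^c-submodule of E. Then the compact pull-backs satisfy (gf)^#(E₀) = f^#(g^#(E₀)). -/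
/-!
Formalization of statements from "Grothendieck-Neeman duality and the
Wirthmüller isomorphism" by Balmer, Dell'Ambrogio and Sanders.
-/

noncomputable section

open CategoryTheory CategoryTheory.Limits CategoryTheory.Pretriangulated
  CategoryTheory.MonoidalCategory CategoryTheory.MonoidalClosed Opposite

universe v u u₁ u₂ u₃

namespace GN

section AuxRigid

variable {C : Type u} [Category.{v} C] [MonoidalCategory C] [MonoidalClosed C]

/-- The coevaluation associated to a rigid object. -/
def rigidCoev {x : C} (hx : IsRigid x) : 𝟙_ C ⟶ ((ihom x).obj (𝟙_ C)) ⊗ x :=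
  haveI := hx x
  curry (ρ_ x).hom ≫ inv (rigidComparison x x)

theorem rigid_T1 {x : C} (hx : IsRigid x) :
    x ◁ rigidCoev hx ≫ (α_ x ((ihom x).obj (𝟙_ C)) x).inv ≫ (ihom.ev x).app (𝟙_ C) ▷ x =
    (ρ_ x).hom ≫ (λ_ x).inv := by
  haveI := hx x
  rw [← cancel_mono (λ_ x).hom]
  have h : (α_ x ((ihom x).obj (𝟙_ C)) x).inv ≫ (ihom.ev x).app (𝟙_ C) ▷ x ≫ (λ_ x).hom
      = uncurry (rigidComparison x x) := by
    rw [rigidComparison, uncurry_curry]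
  simp only [Category.assoc, Iso.inv_hom_id, Category.comp_id]
  rw [h, ← uncurry_natural_left]
  simp only [rigidCoev, Category.assoc, IsIso.inv_hom_id, Category.comp_id, uncurry_curry]

/-- From an object satisfying `IsRigid`, construct an honest exact pairing
`(D x, x)` where `D x = hom(x, 𝟙)`. -/
def exactPairingOfIsRigid {x : C} (hx : IsRigid x) :
    ExactPairing ((ihom x).obj (𝟙_ C)) x where
  coevaluation' := rigidCoev hx
  evaluation' := (ihom.ev x).app (𝟙_ C)
  coevaluation_evaluation' := rigid_T1 hx
  evaluation_coevaluation' := by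
    set H := (ihom x).obj (𝟙_ C) with hH
    set e : x ⊗ H ⟶ 𝟙_ C := (ihom.ev x).app (𝟙_ C) with he
    set η : 𝟙_ C ⟶ H ⊗ x := rigidCoev hx with hη
    have T1 : x ◁ η ≫ (α_ x H x).inv ≫ e ▷ x = (ρ_ x).hom ≫ (λ_ x).inv := rigid_T1 hx
    have W : (ρ_ x).inv ≫ x ◁ η ≫ (α_ x H x).inv ≫ e ▷ x ≫ (λ_ x).hom = 𝟙 x := by
      rw [reassoc_of% T1]; simp
    have main : (λ_ H).inv ≫ (η ▷ H) ≫ (α_ H x H).hom ≫ (H ◁ e) ≫ (ρ_ H).hom = 𝟙 H := by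
      apply uncurry_injective
      rw [uncurry_eq, uncurry_eq]
      simp only [MonoidalCategory.whiskerLeft_comp, Category.assoc,
        MonoidalCategory.whiskerLeft_id, Category.id_comp]
      calc x ◁ (λ_ H).inv ≫ x ◁ (η ▷ H) ≫ x ◁ (α_ H x H).hom ≫
              x ◁ (H ◁ e) ≫ x ◁ (ρ_ H).hom ≫ (ihom.ev x).app (𝟙_ C)
          = x ◁ (λ_ H).inv ≫ x ◁ (η ▷ H) ≫ x ◁ (α_ H x H).hom ≫
              (α_ x H (x ⊗ H)).inv ≫ ((x ⊗ H) ◁ e) ≫ (ρ_ (x ⊗ H)).hom ≫ e := by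
            rw [← he]
            congr 3
            monoidal
        _ = x ◁ (λ_ H).inv ≫ x ◁ (η ▷ H) ≫ x ◁ (α_ H x H).hom ≫
              (α_ x H (x ⊗ H)).inv ≫ (e ▷ (x ⊗ H)) ≫ (λ_ (x ⊗ H)).hom ≫ e := by
            congr 4
            calc ((x ⊗ H) ◁ e) ≫ (ρ_ (x ⊗ H)).hom ≫ e
                = ((x ⊗ H) ◁ e) ≫ (e ▷ (𝟙_ C)) ≫ (ρ_ (𝟙_ C)).hom := by
                  rw [MonoidalCategory.rightUnitor_naturality]
              _ = (e ▷ (x ⊗ H)) ≫ ((𝟙_ C) ◁ e) ≫ (ρ_ (𝟙_ C)).hom := by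
                  rw [← Category.assoc, ← Category.assoc, whisker_exchange]
              _ = (e ▷ (x ⊗ H)) ≫ ((𝟙_ C) ◁ e) ≫ (λ_ (𝟙_ C)).hom := by
                  rw [unitors_equal]
              _ = (e ▷ (x ⊗ H)) ≫ (λ_ (x ⊗ H)).hom ≫ e := by
                  rw [MonoidalCategory.leftUnitor_naturality]
        _ = ((ρ_ x).inv ▷ H) ≫ ((x ◁ η) ▷ H) ≫ ((α_ x H x).inv ▷ H) ≫
              ((e ▷ x) ▷ H) ≫ ((λ_ x).hom ▷ H) ≫ e := by
            monoidal
        _ = (((ρ_ x).inv ≫ x ◁ η ≫ (α_ x H x).inv ≫ e ▷ x ≫ (λ_ x).hom) ▷ H) ≫ e := by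
            simp only [comp_whiskerRight, Category.assoc]
        _ = e := by rw [W]; simp
    rw [← cancel_epi (λ_ H).inv, ← cancel_mono (ρ_ H).hom]
    simpa using main

/-- The unit object is rigid. -/
theorem isRigid_unit : IsRigid (𝟙_ C) := by
  have huv : ∀ z : C, (curry (λ_ z).hom) ≫
      ((λ_ ((ihom (𝟙_ C)).obj z)).inv ≫ (ihom.ev (𝟙_ C)).app z) = 𝟙 z := by
    intro z
    rw [← Category.assoc, MonoidalCategory.leftUnitor_inv_naturality, Category.assoc,
      ← uncurry_eq, uncurry_curry, Iso.inv_hom_id]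
  have hvu : ∀ z : C, ((λ_ ((ihom (𝟙_ C)).obj z)).inv ≫ (ihom.ev (𝟙_ C)).app z) ≫
      (curry (λ_ z).hom) = 𝟙 ((ihom (𝟙_ C)).obj z) := by
    intro z
    apply uncurry_injective
    rw [uncurry_natural_left, uncurry_curry, uncurry_id_eq_ev]
    simp only [MonoidalCategory.whiskerLeft_comp, Category.assoc]
    rw [MonoidalCategory.leftUnitor_naturality]
    have hc : (𝟙_ C) ◁ (λ_ ((ihom (𝟙_ C)).obj z)).inv ≫
        (λ_ ((𝟙_ C) ⊗ (ihom (𝟙_ C)).obj z)).hom = 𝟙 _ := by monoidal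
    rw [← Category.assoc, hc, Category.id_comp]
  intro y
  have hrc : rigidComparison (𝟙_ C) y =
      (((λ_ ((ihom (𝟙_ C)).obj (𝟙_ C))).inv ≫ (ihom.ev (𝟙_ C)).app (𝟙_ C)) ▷ y) ≫
        (λ_ y).hom ≫ (curry (λ_ y).hom) := by
    apply uncurry_injective
    rw [rigidComparison, uncurry_curry, uncurry_natural_left, uncurry_natural_left,
      uncurry_curry, MonoidalCategory.leftUnitor_naturality,
      MonoidalCategory.leftUnitor_naturality_assoc]
    simp only [comp_whiskerRight, Category.assoc]
    have hc : (λ_ (((ihom (𝟙_ C)).obj (𝟙_ C)) ⊗ y)).hom ≫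
        ((λ_ ((ihom (𝟙_ C)).obj (𝟙_ C))).inv ▷ y) =
        (α_ (𝟙_ C) ((ihom (𝟙_ C)).obj (𝟙_ C)) y).inv := by
      monoidal
    rw [reassoc_of% hc]
  rw [hrc]
  haveI h1 : IsIso ((λ_ ((ihom (𝟙_ C)).obj (𝟙_ C))).inv ≫ (ihom.ev (𝟙_ C)).app (𝟙_ C)) :=
    ⟨curry (λ_ (𝟙_ C)).hom, hvu _, huv _⟩
  haveI h2 : IsIso (curry (λ_ y).hom) :=
    ⟨(λ_ ((ihom (𝟙_ C)).obj y)).inv ≫ (ihom.ev (𝟙_ C)).app y, huv _, hvu _⟩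
  infer_instance

end AuxRigid

section AuxFunctor

open Functor.LaxMonoidal Functor.OplaxMonoidal

variable {A : Type u₁} {B : Type u₂} [Category.{v} A] [Category.{v} B]
  [MonoidalCategory A] [MonoidalCategory B]

/-- A monoidal functor preserves exact pairings. -/
def exactPairingMap (F : A ⥤ B) [F.Monoidal] (X Y : A) [ExactPairing X Y] :
    ExactPairing (F.obj X) (F.obj Y) where
  coevaluation' := ε F ≫ F.map (η_ X Y) ≫ δ F X Y
  evaluation' := μ F Y X ≫ F.map (ε_ X Y) ≫ η F
  coevaluation_evaluation' := by
    have key : F.obj Y ◁ δ F X Y ≫ (α_ (F.obj Y) (F.obj X) (F.obj Y)).inv ≫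
        μ F Y X ▷ F.obj Y =
        μ F Y (X ⊗ Y) ≫ F.map (α_ Y X Y).inv ≫ δ F (Y ⊗ X) Y := by
      rw [← cancel_mono (μ F (Y ⊗ X) Y)]
      simp only [Category.assoc, Functor.Monoidal.δ_μ, Category.comp_id]
      rw [← Functor.LaxMonoidal.associativity_inv]
      rw [Functor.Monoidal.whiskerLeft_δ_μ_assoc]
    have hmid : F.map ((Y : A) ◁ η_ X Y) ≫ F.map (α_ Y X Y).inv ≫ F.map (ε_ X Y ▷ Y) =
        F.map (ρ_ Y).hom ≫ F.map (λ_ Y).inv := by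
      rw [← Functor.map_comp, ← Functor.map_comp, ExactPairing.coevaluation_evaluation,
        Functor.map_comp]
    have h1 : F.obj Y ◁ ε F ≫ μ F Y (𝟙_ A) ≫ F.map (ρ_ Y).hom = (ρ_ (F.obj Y)).hom :=
      (Functor.LaxMonoidal.right_unitality F Y).symm
    have h2 : F.map (λ_ Y).inv ≫ δ F (𝟙_ A) Y ≫ η F ▷ F.obj Y = (λ_ (F.obj Y)).inv :=
      (Functor.OplaxMonoidal.left_unitality F Y).symm
    simp only [MonoidalCategory.whiskerLeft_comp, comp_whiskerRight, Category.assoc]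
    rw [reassoc_of% key]
    rw [Functor.LaxMonoidal.μ_natural_right_assoc]
    rw [Functor.OplaxMonoidal.δ_natural_left_assoc]
    rw [reassoc_of% hmid]
    rw [reassoc_of% h1, h2]
  evaluation_coevaluation' := by
    have key : δ F X Y ▷ F.obj X ≫ (α_ (F.obj X) (F.obj Y) (F.obj X)).hom ≫
        F.obj X ◁ μ F Y X =
        μ F (X ⊗ Y) X ≫ F.map (α_ X Y X).hom ≫ δ F X (Y ⊗ X) := by
      rw [← cancel_mono (μ F X (Y ⊗ X))]
      simp only [Category.assoc, Functor.Monoidal.δ_μ, Category.comp_id]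
      rw [← Functor.LaxMonoidal.associativity]
      rw [Functor.Monoidal.whiskerRight_δ_μ_assoc]
    have hmid : F.map (η_ X Y ▷ (X : A)) ≫ F.map (α_ X Y X).hom ≫ F.map (X ◁ ε_ X Y) =
        F.map (λ_ X).hom ≫ F.map (ρ_ X).inv := by
      rw [← Functor.map_comp, ← Functor.map_comp, ExactPairing.evaluation_coevaluation,
        Functor.map_comp]
    have h1 : ε F ▷ F.obj X ≫ μ F (𝟙_ A) X ≫ F.map (λ_ X).hom = (λ_ (F.obj X)).hom :=
      (Functor.LaxMonoidal.left_unitality F X).symm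
    have h2 : F.map (ρ_ X).inv ≫ δ F X (𝟙_ A) ≫ F.obj X ◁ η F = (ρ_ (F.obj X)).inv :=
      (Functor.OplaxMonoidal.right_unitality F X).symm
    simp only [MonoidalCategory.whiskerLeft_comp, comp_whiskerRight, Category.assoc]
    rw [reassoc_of% key]
    rw [Functor.LaxMonoidal.μ_natural_left_assoc]
    rw [Functor.OplaxMonoidal.δ_natural_right_assoc]
    rw [reassoc_of% hmid]
    rw [reassoc_of% h1, h2]

end AuxFunctor

section AuxCompact

variable {C : Type u} [Category.{v} C] [Preadditive C]

/-- If `L ⊣ R` with `R` additive and coproduct-preserving, then `L` preserves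
compact objects. -/
theorem isCompactObj_of_adjunction {L R : C ⥤ C} (adj : L ⊣ R) [R.Additive]
    (hR : ∀ J : Type v, PreservesColimitsOfShape (Discrete J) R)
    {t : C} (ht : IsCompactObj t) : IsCompactObj (L.obj t) := by
  have hadd : ∀ (z : C) (f g : L.obj t ⟶ z),
      adj.homEquiv t z (f + g) = adj.homEquiv t z f + adj.homEquiv t z g := by
    intro z f g
    simp [Adjunction.homEquiv_unit, Functor.map_add, Preadditive.comp_add]
  have e : preadditiveCoyoneda.obj (op (L.obj t)) ≅ R ⋙ preadditiveCoyoneda.obj (op t) :=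
    NatIso.ofComponents
      (fun z =>
        { hom := AddCommGrpCat.ofHom (AddMonoidHom.mk' (fun f => adj.homEquiv t z f) (hadd z))
          inv := AddCommGrpCat.ofHom (AddMonoidHom.mk' (fun g => (adj.homEquiv t z).symm g)
            (fun g g' => (adj.homEquiv t z).injective (by
              exact (Equiv.apply_symm_apply _ _).trans ((congrArg₂ (· + ·)
                (Equiv.apply_symm_apply _ g).symm (Equiv.apply_symm_apply _ g').symm).trans
                (hadd z _ _).symm))))
          hom_inv_id := by
            ext f
            change (adj.homEquiv t z).symm ((adj.homEquiv t z) f) = f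
            exact Equiv.symm_apply_apply _ f
          inv_hom_id := by
            ext f
            change (adj.homEquiv t z) ((adj.homEquiv t z).symm f) = f
            exact Equiv.apply_symm_apply _ f })
      (fun {z z'} f => by
        ext g
        change adj.homEquiv t z' (g ≫ f) = adj.homEquiv t z g ≫ R.map f
        exact Adjunction.homEquiv_naturality_right adj g f)
  intro J
  obtain ⟨h2⟩ := ht J
  haveI := h2
  haveI := hR J
  exact ⟨preservesColimitsOfShape_of_natIso e.symm⟩

variable [MonoidalCategory C] [MonoidalClosed C]

theorem tensorLeft_additive (hco : HasCoproducts.{v} C) (w : C) : (tensorLeft w).Additive := by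
  haveI := hco (ULift.{v} WalkingPair)
  haveI : HasBinaryCoproducts C :=
    hasColimitsOfShape_of_equivalence (Discrete.equivalence Equiv.ulift)
  haveI : HasBinaryBiproducts C := HasBinaryBiproducts.of_hasBinaryCoproducts
  haveI : PreservesColimitsOfSize.{0, 0} (tensorLeft w) :=
    (ihom.adjunction w).leftAdjoint_preservesColimits
  haveI : (tensorLeft w).IsLeftAdjoint := (ihom.adjunction w).isLeftAdjoint
  haveI := preservesBinaryBiproducts_of_preservesBinaryCoproducts (tensorLeft w)
  exact Functor.additive_of_preservesBinaryBiproducts _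

theorem isCompactObj_tensor (hco : HasCoproducts.{v} C) (v' a : C) [ExactPairing v' a]
    {b : C} (hb : IsCompactObj b) : IsCompactObj (a ⊗ b) := by
  haveI : (tensorLeft v').Additive := tensorLeft_additive hco v'
  haveI : PreservesColimitsOfSize.{v, v} (tensorLeft v') :=
    (ihom.adjunction v').leftAdjoint_preservesColimits
  exact isCompactObj_of_adjunction (tensorLeftAdjunction v' a)
    (fun J => inferInstance) hb

end AuxCompact

section AuxProj

variable {D : Type u₁} {C : Type u₂} [Category.{v} D] [Category.{v} C]
  [MonoidalCategory D] [MonoidalCategory C]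

/-- The projection-formula isomorphism `d ⊗ f_*(-) ≅ f_*(f^*(d) ⊗ -)` for a
dualizable object `d`, obtained by uniqueness of right adjoints. -/
def pushProjIso (fstar : D ⥤ C) [fstar.Monoidal] (fpush : C ⥤ D) (adjf : fstar ⊣ fpush)
    (d d' : D) [ExactPairing d d'] [ExactPairing (fstar.obj d) (fstar.obj d')] :
    fpush ⋙ tensorLeft d ≅ tensorLeft (fstar.obj d) ⋙ fpush :=
  Adjunction.rightAdjointUniq
    (((tensorLeftAdjunction d d').comp adjf).ofNatIsoLeft
      (NatIso.ofComponents (F := tensorLeft d' ⋙ fstar) (G := fstar ⋙ tensorLeft (fstar.obj d'))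
        (fun t => (Functor.Monoidal.μIso fstar d' t).symm)
        (fun {t t'} f => by
          simpa using Functor.OplaxMonoidal.δ_natural_right fstar d' f)))
    (adjf.comp (tensorLeftAdjunction (fstar.obj d) (fstar.obj d')))

end AuxProj

/-- Proposition 5.18: compact pull-back is compatible with
composition. -/
theorem statement16 {E : Type u₁} {D : Type u₂} {C : Type u₃}
    [Category.{v} E] [Preadditive E] [HasZeroObject E] [HasShift E ℤ]
    [∀ n : ℤ, (shiftFunctor E n).Additive] [Pretriangulated E] [IsTriangulated E]
    [MonoidalCategory E] [SymmetricCategory E] [MonoidalClosed E]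
    [Category.{v} D] [Preadditive D] [HasZeroObject D] [HasShift D ℤ]
    [∀ n : ℤ, (shiftFunctor D n).Additive] [Pretriangulated D] [IsTriangulated D]
    [MonoidalCategory D] [SymmetricCategory D] [MonoidalClosed D]
    [Category.{v} C] [Preadditive C] [HasZeroObject C] [HasShift C ℤ]
    [∀ n : ℤ, (shiftFunctor C n).Additive] [Pretriangulated C] [IsTriangulated C]
    [MonoidalCategory C] [SymmetricCategory C] [MonoidalClosed C]
    (gstar : E ⥤ D) [gstar.Braided] [gstar.CommShift ℤ] [gstar.IsTriangulated]
    (fstar : D ⥤ C) [fstar.Braided] [fstar.CommShift ℤ] [fstar.IsTriangulated]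
    (hE : RigidlyCompactlyGenerated E) (hD : RigidlyCompactlyGenerated D)
    (hC : RigidlyCompactlyGenerated C)
    (hcopg : PreservesCoproducts gstar) (hcopf : PreservesCoproducts fstar)
    (gpush : D ⥤ E) (adjg : gstar ⊣ gpush)
    (fpush : C ⥤ D) (adjf : fstar ⊣ fpush)
    (E₀ : Set E) (hmod : IsSubmodule E₀) :
    compactPullback (fpush ⋙ gpush) E₀ =
      compactPullback fpush (compactPullback gpush E₀) := by
  have memIso : ∀ {a b : E}, (a ≅ b) → b ∈ E₀ → a ∈ E₀ := fun e hb =>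
    hmod.retract _ _ ⟨e.hom, e.inv, e.hom_inv_id⟩ hb
  ext x
  simp only [compactPullback, Set.mem_setOf_eq, Functor.comp_obj]
  constructor
  · intro h c hc d hd
    have hrd : IsRigid d := (hD.compact_iff_rigid d).mp hd
    letI P1 : ExactPairing ((ihom d).obj (𝟙_ D)) d := exactPairingOfIsRigid hrd
    letI P2 : ExactPairing d ((ihom d).obj (𝟙_ D)) :=
      BraidedCategory.exactPairing_swap _ _
    letI P3 : ExactPairing (fstar.obj d) (fstar.obj ((ihom d).obj (𝟙_ D))) :=
      exactPairingMap fstar _ _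
    letI P4 : ExactPairing (fstar.obj ((ihom d).obj (𝟙_ D))) (fstar.obj d) :=
      exactPairingMap fstar _ _
    have hcomp : IsCompactObj (fstar.obj d ⊗ c) :=
      isCompactObj_tensor hC.hasCoproducts (fstar.obj ((ihom d).obj (𝟙_ D))) (fstar.obj d) hc
    have hmem := h _ hcomp
    exact memIso
      (gpush.mapIso ((pushProjIso fstar fpush adjf d ((ihom d).obj (𝟙_ D))).app (c ⊗ x) ≪≫
        fpush.mapIso (α_ (fstar.obj d) c x).symm)) hmem
  · intro h c hc
    have h1 := h c hc (𝟙_ D) ((hD.compact_iff_rigid _).mpr isRigid_unit)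
    exact memIso (gpush.mapIso (λ_ (fpush.obj (c ⊗ x))).symm) h1

end GN
end
end
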